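/- The lattice (P(ℝ), ≤st) is Dedekind super complete: every nonempty set K ⊆ P(ℝ) which is bounded above with respect to ≤st has a least upper bound in P(ℝ) and a countable subset K₀ ⊆ K with the same least upper bound; dually, every nonempty K bounded below with respect to ≤st has a greatest lower bound and a countable subset with the same greatest lower bound. -/

import Mathlib

open MeasureTheory Filter Set Topology

/-- First order stochastic dominance on `P(ℝ)`. -/
def StOrd (μ ν : ProbabilityMeasure ℝ) : Prop :=
  ∀ s : ℝ, (μ : Measure ℝ) (Ioi s) ≤ (ν : Measure ℝ) (Ioi s)

open ProbabilityTheory Function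

private lemma tendsto_cdf_right (m : Measure ℝ) (x : ℝ) :
    Tendsto (cdf m) (𝓝[>] x) (𝓝 (cdf m x)) :=
  ((cdf m).right_continuous x).mono_left (nhdsWithin_mono x Ioi_subset_Ici_self)

private lemma stOrd_iff (μ ν : ProbabilityMeasure ℝ) :
    StOrd μ ν ↔ ∀ s : ℝ, cdf (ν : Measure ℝ) s ≤ cdf (μ : Measure ℝ) s := by
  unfold StOrd
  refine forall_congr' fun s => ?_
  have key : ∀ ρ : ProbabilityMeasure ℝ,
      (ρ : Measure ℝ) (Ioi s) = 1 - ENNReal.ofReal (cdf (ρ : Measure ℝ) s) := by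
    intro ρ
    rw [ofReal_cdf, ← compl_Iic, prob_compl_eq_one_sub measurableSet_Iic]
  have hle : ENNReal.ofReal (cdf (ν : Measure ℝ) s) ≤ 1 := by
    rw [ofReal_cdf]; exact prob_le_one
  rw [key μ, key ν, ENNReal.sub_le_sub_iff_left hle ENNReal.one_ne_top,
    ENNReal.ofReal_le_ofReal_iff (cdf_nonneg _ _)]

private lemma exists_rightLim_measure {f : ℝ → ℝ} (hf : Monotone f)
    (lo hi : ProbabilityMeasure ℝ)
    (hlo : ∀ x, cdf (lo : Measure ℝ) x ≤ f x)
    (hhi : ∀ x, f x ≤ cdf (hi : Measure ℝ) x) :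
    ∃ σ : ProbabilityMeasure ℝ, ∀ x, cdf (σ : Measure ℝ) x = rightLim f x := by
  set F := hf.stieltjesFunction with hFdef
  have hFval : ∀ x, F x = rightLim f x := fun x => rfl
  have hFlo : ∀ x, cdf (lo : Measure ℝ) x ≤ F x := fun x =>
    (hlo x).trans (hf.le_rightLim le_rfl)
  have hFhi : ∀ x, F x ≤ cdf (hi : Measure ℝ) x := by
    intro x
    refine ge_of_tendsto (tendsto_cdf_right (hi : Measure ℝ) x) ?_
    filter_upwards [self_mem_nhdsWithin] with y hy
    exact (hf.rightLim_le hy).trans (hhi y)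
  have h0 : Tendsto F atBot (𝓝 0) :=
    tendsto_of_tendsto_of_tendsto_of_le_of_le tendsto_const_nhds
      (tendsto_cdf_atBot _) (fun x => (cdf_nonneg _ x).trans (hFlo x)) hFhi
  have h1 : Tendsto F atTop (𝓝 1) :=
    tendsto_of_tendsto_of_tendsto_of_le_of_le (tendsto_cdf_atTop _)
      tendsto_const_nhds hFlo (fun x => (hFhi x).trans (cdf_le_one _ x))
  have hP : IsProbabilityMeasure F.measure := F.isProbabilityMeasure h0 h1
  refine ⟨⟨F.measure, hP⟩, fun x => ?_⟩
  have h := cdf_measure_stieltjesFunction F h0 h1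
  show cdf F.measure x = rightLim f x
  rw [h]
  exact hFval x

/-- **Statement 8.** The lattice `(P(ℝ), ≤st)` is Dedekind super complete: every nonempty set
bounded above w.r.t. `≤st` has a least upper bound and a countable subset with the same least
upper bound, and dually for sets bounded below. -/
theorem stmt_8 :
    (∀ K : Set (ProbabilityMeasure ℝ), K.Nonempty → (∃ b, ∀ μ ∈ K, StOrd μ b) →
      ∃ σ : ProbabilityMeasure ℝ,
        (∀ μ ∈ K, StOrd μ σ) ∧ (∀ b, (∀ μ ∈ K, StOrd μ b) → StOrd σ b) ∧
        ∃ K₀ ⊆ K, K₀.Countable ∧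
          (∀ μ ∈ K₀, StOrd μ σ) ∧ (∀ b, (∀ μ ∈ K₀, StOrd μ b) → StOrd σ b)) ∧
    (∀ K : Set (ProbabilityMeasure ℝ), K.Nonempty → (∃ b, ∀ μ ∈ K, StOrd b μ) →
      ∃ τ : ProbabilityMeasure ℝ,
        (∀ μ ∈ K, StOrd τ μ) ∧ (∀ b, (∀ μ ∈ K, StOrd b μ) → StOrd b τ) ∧
        ∃ K₀ ⊆ K, K₀.Countable ∧
          (∀ μ ∈ K₀, StOrd τ μ) ∧ (∀ b, (∀ μ ∈ K₀, StOrd b μ) → StOrd b τ)) := by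
  constructor
  · -- least upper bounds
    rintro K ⟨μ₀, hμ₀⟩ ⟨b, hb⟩
    set f : ℝ → ℝ :=
      fun s => sInf ((fun μ : ProbabilityMeasure ℝ => cdf (μ : Measure ℝ) s) '' K) with hfdef
    have hne : ∀ s : ℝ,
        ((fun μ : ProbabilityMeasure ℝ => cdf (μ : Measure ℝ) s) '' K).Nonempty :=
      fun s => ⟨_, ⟨μ₀, hμ₀, rfl⟩⟩
    have hbdd : ∀ s : ℝ,
        BddBelow ((fun μ : ProbabilityMeasure ℝ => cdf (μ : Measure ℝ) s) '' K) := by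
      intro s
      refine ⟨0, ?_⟩
      rintro _ ⟨μ, hμ, rfl⟩
      exact cdf_nonneg _ _
    have hflb : ∀ (s : ℝ), ∀ μ ∈ K, f s ≤ cdf (μ : Measure ℝ) s :=
      fun s μ hμ => csInf_le (hbdd s) ⟨μ, hμ, rfl⟩
    have hfge : ∀ (s : ℝ) (r : ℝ), (∀ μ ∈ K, r ≤ cdf (μ : Measure ℝ) s) → r ≤ f s := by
      intro s r h
      refine le_csInf (hne s) ?_
      rintro _ ⟨μ, hμ, rfl⟩
      exact h μ hμ
    have hf : Monotone f := by
      intro s t hst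
      refine le_csInf (hne t) ?_
      rintro _ ⟨μ, hμ, rfl⟩
      exact (hflb s μ hμ).trans (monotone_cdf _ hst)
    have hlo : ∀ x, cdf (b : Measure ℝ) x ≤ f x :=
      fun x => hfge x _ (fun μ hμ => (stOrd_iff μ b).1 (hb μ hμ) x)
    obtain ⟨σ, hσ⟩ := exists_rightLim_measure hf b μ₀ hlo (fun x => hflb x μ₀ hμ₀)
    have hub : ∀ μ ∈ K, StOrd μ σ := by
      intro μ hμ
      rw [stOrd_iff]
      intro s
      rw [hσ]
      refine ge_of_tendsto (tendsto_cdf_right (μ : Measure ℝ) s) ?_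
      filter_upwards [self_mem_nhdsWithin] with y hy
      exact (hf.rightLim_le hy).trans (hflb y μ hμ)
    have hlub : ∀ b', (∀ μ ∈ K, StOrd μ b') → StOrd σ b' := by
      intro b' hb'
      rw [stOrd_iff]
      intro s
      rw [hσ]
      exact (hfge s _ fun μ hμ => (stOrd_iff μ b').1 (hb' μ hμ) s).trans
        (hf.le_rightLim le_rfl)
    have hchoice : ∀ (q : ℚ) (n : ℕ),
        ∃ μ ∈ K, cdf (μ : Measure ℝ) (q : ℝ) < f q + 1 / (n + 1) := by
      intro q n
      have h : f q < f q + 1 / (n + 1) :=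
        lt_add_of_pos_right _ (by positivity)
      obtain ⟨_, ⟨μ, hμ, rfl⟩, hlt⟩ := exists_lt_of_csInf_lt (hne q) h
      exact ⟨μ, hμ, hlt⟩
    choose c hcK hclt using hchoice
    refine ⟨σ, hub, hlub, Set.range (fun p : ℚ × ℕ => c p.1 p.2), ?_,
      Set.countable_range _, fun μ hμ => ?_, ?_⟩
    · rintro _ ⟨⟨q, n⟩, rfl⟩
      exact hcK q n
    · obtain ⟨⟨q, n⟩, rfl⟩ := hμ
      exact hub _ (hcK q n)
    · intro b' hb'
      rw [stOrd_iff]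
      intro s
      rw [hσ]
      refine ge_of_tendsto (hf.tendsto_rightLim s) ?_
      filter_upwards [self_mem_nhdsWithin] with y hy
      obtain ⟨q, hsq, hqy⟩ := exists_rat_btwn (show s < y from hy)
      have hq : cdf (b' : Measure ℝ) (q : ℝ) ≤ f q := by
        refine le_of_forall_pos_le_add ?_
        intro ε hε
        obtain ⟨n, hn⟩ := exists_nat_one_div_lt hε
        have h1 : cdf (b' : Measure ℝ) (q : ℝ) ≤ cdf (c q n : Measure ℝ) (q : ℝ) :=
          (stOrd_iff _ b').1 (hb' _ ⟨(q, n), rfl⟩) q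
        have h2 := hclt q n
        linarith
      calc cdf (b' : Measure ℝ) s ≤ cdf (b' : Measure ℝ) q := monotone_cdf _ hsq.le
        _ ≤ f q := hq
        _ ≤ f y := hf hqy.le
  · -- greatest lower bounds
    rintro K ⟨μ₀, hμ₀⟩ ⟨b, hb⟩
    set f : ℝ → ℝ :=
      fun s => sSup ((fun μ : ProbabilityMeasure ℝ => cdf (μ : Measure ℝ) s) '' K) with hfdef
    have hne : ∀ s : ℝ,
        ((fun μ : ProbabilityMeasure ℝ => cdf (μ : Measure ℝ) s) '' K).Nonempty :=
      fun s => ⟨_, ⟨μ₀, hμ₀, rfl⟩⟩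
    have hbdd : ∀ s : ℝ,
        BddAbove ((fun μ : ProbabilityMeasure ℝ => cdf (μ : Measure ℝ) s) '' K) := by
      intro s
      refine ⟨1, ?_⟩
      rintro _ ⟨μ, hμ, rfl⟩
      exact cdf_le_one _ _
    have hfub : ∀ (s : ℝ), ∀ μ ∈ K, cdf (μ : Measure ℝ) s ≤ f s :=
      fun s μ hμ => le_csSup (hbdd s) ⟨μ, hμ, rfl⟩
    have hfle : ∀ (s : ℝ) (r : ℝ), (∀ μ ∈ K, cdf (μ : Measure ℝ) s ≤ r) → f s ≤ r := by
      intro s r h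
      refine csSup_le (hne s) ?_
      rintro _ ⟨μ, hμ, rfl⟩
      exact h μ hμ
    have hf : Monotone f := by
      intro s t hst
      refine csSup_le (hne s) ?_
      rintro _ ⟨μ, hμ, rfl⟩
      exact (monotone_cdf _ hst).trans (hfub t μ hμ)
    have hhi : ∀ x, f x ≤ cdf (b : Measure ℝ) x :=
      fun x => hfle x _ (fun μ hμ => (stOrd_iff b μ).1 (hb μ hμ) x)
    obtain ⟨τ, hτ⟩ := exists_rightLim_measure hf μ₀ b (fun x => hfub x μ₀ hμ₀) hhi
    have hlbd : ∀ μ ∈ K, StOrd τ μ := by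
      intro μ hμ
      rw [stOrd_iff]
      intro s
      rw [hτ]
      exact (hfub s μ hμ).trans (hf.le_rightLim le_rfl)
    have hglb : ∀ b', (∀ μ ∈ K, StOrd b' μ) → StOrd b' τ := by
      intro b' hb'
      rw [stOrd_iff]
      intro s
      rw [hτ]
      refine ge_of_tendsto (tendsto_cdf_right (b' : Measure ℝ) s) ?_
      filter_upwards [self_mem_nhdsWithin] with y hy
      exact (hf.rightLim_le hy).trans
        (hfle y _ fun μ hμ => (stOrd_iff b' μ).1 (hb' μ hμ) y)
    have hchoice : ∀ (q : ℚ) (n : ℕ),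
        ∃ μ ∈ K, f q - 1 / (n + 1) < cdf (μ : Measure ℝ) (q : ℝ) := by
      intro q n
      have h : f q - 1 / (n + 1) < f q := by
        have : (0:ℝ) < 1 / (n + 1) := by positivity
        linarith
      obtain ⟨_, ⟨μ, hμ, rfl⟩, hlt⟩ := exists_lt_of_lt_csSup (hne q) h
      exact ⟨μ, hμ, hlt⟩
    choose c hcK hclt using hchoice
    refine ⟨τ, hlbd, hglb, Set.range (fun p : ℚ × ℕ => c p.1 p.2), ?_,
      Set.countable_range _, fun μ hμ => ?_, ?_⟩
    · rintro _ ⟨⟨q, n⟩, rfl⟩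
      exact hcK q n
    · obtain ⟨⟨q, n⟩, rfl⟩ := hμ
      exact hlbd _ (hcK q n)
    · intro b' hb'
      rw [stOrd_iff]
      intro s
      rw [hτ]
      refine ge_of_tendsto (tendsto_cdf_right (b' : Measure ℝ) s) ?_
      filter_upwards [self_mem_nhdsWithin] with y hy
      obtain ⟨q, hsq, hqy⟩ := exists_rat_btwn (show s < y from hy)
      have hq : f q ≤ cdf (b' : Measure ℝ) (q : ℝ) := by
        refine le_of_forall_pos_le_add ?_
        intro ε hε
        obtain ⟨n, hn⟩ := exists_nat_one_div_lt hε
        have h1 : cdf (c q n : Measure ℝ) (q : ℝ) ≤ cdf (b' : Measure ℝ) (q : ℝ) :=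
          (stOrd_iff b' _).1 (hb' _ ⟨(q, n), rfl⟩) q
        have h2 := hclt q n
        linarith
      calc rightLim f s ≤ f q := hf.rightLim_le hsq
        _ ≤ cdf (b' : Measure ℝ) q := hq
        _ ≤ cdf (b' : Measure ℝ) y := monotone_cdf _ hqy.le
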